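/- Fix real numbers α and d with 0 < d < 1, and fix integers s ≥ 1 and N ≥ 1. Then, as K → ∞ along the natural numbers, Γ(α+d+(K+N)s)/Γ(α+(K+N)s) − Γ(α+d+Ks)/Γ(α+Ks) is asymptotically equivalent to d·N·s^d·K^(d−1); that is, the ratio of the two expressions converges to 1 as K → ∞. -/

import Mathlib

open Real Filter

-- Wendel upper bound: Γ(x+d) ≤ Γ(x) * x^d for 0<x, 0<d<1
lemma gamma_upper (d : ℝ) (hd0 : 0 < d) (hd1 : d < 1) {x : ℝ} (hx : 0 < x) :
    Real.Gamma (x + d) ≤ Real.Gamma x * x ^ d := by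
  have key := Real.Gamma_mul_add_mul_le_rpow_Gamma_mul_rpow_Gamma (s := x) (t := x + 1)
    (a := 1 - d) (b := d) hx (by linarith) (by linarith) hd0 (by ring)
  have harg : (1 - d) * x + d * (x + 1) = x + d := by ring
  rw [harg, Real.Gamma_add_one hx.ne'] at key
  calc Real.Gamma (x + d) ≤ Real.Gamma x ^ (1 - d) * (x * Real.Gamma x) ^ d := key
    _ = Real.Gamma x * x ^ d := by
        have hGG : Real.Gamma x ^ (1-d) * Real.Gamma x ^ d = Real.Gamma x := by
          rw [← Real.rpow_add (Real.Gamma_pos_of_pos hx)]; norm_num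
        rw [Real.mul_rpow hx.le (Real.Gamma_pos_of_pos hx).le]; linear_combination x ^ d * hGG

-- Wendel lower bound: x * Γ(x) ≤ Γ(x+d) * (x+d)^(1-d)
lemma gamma_lower (d : ℝ) (hd0 : 0 < d) (hd1 : d < 1) {x : ℝ} (hx : 0 < x) :
    x * Real.Gamma x ≤ Real.Gamma (x + d) * (x + d) ^ (1 - d) := by
  have hxd : 0 < x + d := by linarith
  have key := Real.Gamma_mul_add_mul_le_rpow_Gamma_mul_rpow_Gamma (s := x + d) (t := x + d + 1)
    (a := d) (b := 1 - d) hxd (by linarith) hd0 (by linarith) (by ring)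
  have harg : d * (x + d) + (1 - d) * (x + d + 1) = x + 1 := by ring
  rw [harg, Real.Gamma_add_one hx.ne', Real.Gamma_add_one hxd.ne'] at key
  calc x * Real.Gamma x
      ≤ Real.Gamma (x+d) ^ d * ((x+d) * Real.Gamma (x+d)) ^ (1-d) := key
    _ = Real.Gamma (x + d) * (x + d) ^ (1 - d) := by
        have hGG : Real.Gamma (x+d) ^ d * Real.Gamma (x+d) ^ (1-d) = Real.Gamma (x+d) := by
          rw [← Real.rpow_add (Real.Gamma_pos_of_pos hxd)]; norm_num
        rw [Real.mul_rpow hxd.le (Real.Gamma_pos_of_pos hxd).le]; linear_combination (x+d) ^ (1-d) * hGG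

lemma gamma_ratio_tendsto (d : ℝ) (hd0 : 0 < d) (hd1 : d < 1) :
    Tendsto (fun x : ℝ => Real.Gamma (x + d) / (Real.Gamma x * x ^ d)) atTop (nhds 1) := by
  have hlow : Tendsto (fun x : ℝ => (x / (x + d)) ^ (1 - d)) atTop (nhds 1) := by
    have h1 : Tendsto (fun x : ℝ => x / (x + d)) atTop (nhds 1) := by
      have := Tendsto.div_atTop (f := fun _ : ℝ => d) (l := atTop) tendsto_const_nhds
        (tendsto_atTop_add_const_right _ d tendsto_id)
      have h2 : Tendsto (fun x : ℝ => 1 - d / (x + d)) atTop (nhds 1) := by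
        simpa using tendsto_const_nhds.sub this
      refine h2.congr' ?_
      filter_upwards [eventually_gt_atTop 0] with x hx
      have hxd : x + d ≠ 0 := by positivity
      field_simp
      ring
    simpa using h1.rpow_const (Or.inl one_ne_zero)
  refine tendsto_of_tendsto_of_tendsto_of_le_of_le' hlow tendsto_const_nhds ?_ ?_
  · filter_upwards [eventually_gt_atTop 0] with x hx
    have hxd : 0 < x + d := by linarith
    have hG : 0 < Real.Gamma x := Real.Gamma_pos_of_pos hx
    have hGd : 0 < Real.Gamma (x + d) := Real.Gamma_pos_of_pos hxd
    rw [Real.div_rpow hx.le hxd.le, div_le_div_iff₀ (by positivity) (by positivity)]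
    calc x ^ (1-d) * (Real.Gamma x * x ^ d) = (x ^ (1-d) * x ^ d) * Real.Gamma x := by ring
      _ = x * Real.Gamma x := by rw [← Real.rpow_add hx]; norm_num
      _ ≤ Real.Gamma (x + d) * (x + d) ^ (1 - d) := gamma_lower d hd0 hd1 hx
  · filter_upwards [eventually_gt_atTop 0] with x hx
    have hG : 0 < Real.Gamma x := Real.Gamma_pos_of_pos hx
    rw [div_le_one (by positivity)]
    exact gamma_upper d hd0 hd1 hx

lemma gamma_telescope (d : ℝ) (hd : 0 < d) (M : ℕ) {x : ℝ} (hx : 0 < x) :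
    Real.Gamma (x + M + d) / Real.Gamma (x + M) - Real.Gamma (x + d) / Real.Gamma x
      = ∑ j ∈ Finset.range M, d * Real.Gamma (x + j + d) / ((x + j) * Real.Gamma (x + j)) := by
  induction M with
  | zero => simp
  | succ M ih =>
    rw [Finset.sum_range_succ, ← ih]
    have hy : (0:ℝ) < x + M := by positivity
    have hyd : (0:ℝ) < x + M + d := by linarith
    have h1 : x + (↑(M+1) : ℝ) + d = (x + M + d) + 1 := by push_cast; ring
    have h2 : x + (↑(M+1) : ℝ) = (x + M) + 1 := by push_cast; ring
    rw [h1, h2, Real.Gamma_add_one hyd.ne', Real.Gamma_add_one hy.ne']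
    have hG : Real.Gamma (x + M) ≠ 0 := (Real.Gamma_pos_of_pos hy).ne'
    field_simp
    ring

theorem beta_process_size_biased_error_asymptotic
    (α d : ℝ) (hd0 : 0 < d) (hd1 : d < 1) (s N : ℕ) (hs : 1 ≤ s) (hN : 1 ≤ N) :
    Filter.Tendsto
      (fun K : ℕ =>
        (Real.Gamma (α + d + ((K : ℝ) + (N : ℝ)) * (s : ℝ)) /
            Real.Gamma (α + ((K : ℝ) + (N : ℝ)) * (s : ℝ))
          - Real.Gamma (α + d + (K : ℝ) * (s : ℝ)) /
              Real.Gamma (α + (K : ℝ) * (s : ℝ))) /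
        (d * (N : ℝ) * (s : ℝ) ^ d * (K : ℝ) ^ (d - 1)))
      Filter.atTop (nhds 1) := by
  have hs' : (0:ℝ) < (s:ℝ) := by exact_mod_cast hs.trans_lt' Nat.zero_lt_one
  have hN' : (0:ℝ) < (N:ℝ) := by exact_mod_cast hN.trans_lt' Nat.zero_lt_one
  set M := N * s with hMdef
  set F : ℕ → ℕ → ℝ := fun j K =>
    (Real.Gamma ((α + (K:ℝ) * s + j) + d) /
        (Real.Gamma (α + (K:ℝ) * s + j) * (α + (K:ℝ) * s + j) ^ d)) *
      ((α + (K:ℝ) * s + j) / (K:ℝ)) ^ (d - 1) * (1 / ((N:ℝ) * (s:ℝ) ^ d)) with hF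
  set L : ℝ := (s:ℝ) ^ (d - 1) * (1 / ((N:ℝ) * (s:ℝ) ^ d)) with hL
  have hterm : ∀ j : ℕ, Tendsto (fun K : ℕ => F j K) atTop (nhds L) := by
    intro j
    have hy : Tendsto (fun K : ℕ => α + (K:ℝ) * s + (j:ℝ)) atTop atTop := by
      apply tendsto_atTop_add_const_right
      apply tendsto_atTop_add_const_left
      exact tendsto_natCast_atTop_atTop.atTop_mul_const hs'
    have hA := (gamma_ratio_tendsto d hd0 hd1).comp hy
    have hB : Tendsto (fun K : ℕ => (α + (K:ℝ) * s + j) / (K:ℝ)) atTop (nhds (s:ℝ)) := by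
      have h0 : Tendsto (fun K : ℕ => (s:ℝ) + (α + (j:ℝ)) / (K:ℝ)) atTop (nhds ((s:ℝ) + 0)) :=
        tendsto_const_nhds.add (tendsto_const_nhds.div_atTop tendsto_natCast_atTop_atTop)
      rw [add_zero] at h0
      refine h0.congr' ?_
      filter_upwards [eventually_gt_atTop 0] with K hK
      have hK0 : (K:ℝ) ≠ 0 := Nat.cast_ne_zero.mpr hK.ne'
      field_simp
      ring
    have hB2 := hB.rpow_const (p := d - 1) (Or.inl hs'.ne')
    have := (hA.mul hB2).mul (tendsto_const_nhds (x := 1 / ((N:ℝ) * (s:ℝ) ^ d)))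
    rw [one_mul] at this
    exact this
  have hsum : Tendsto (fun K : ℕ => ∑ j ∈ Finset.range M, F j K) atTop
      (nhds (∑ _j ∈ Finset.range M, L)) :=
    tendsto_finset_sum _ (fun j _ => hterm j)
  have hsd : (s:ℝ) ^ d = (s:ℝ) * (s:ℝ) ^ (d - 1) := by
    nth_rewrite 1 [show d = 1 + (d - 1) by ring]
    rw [Real.rpow_add hs', Real.rpow_one]
  have hML : (∑ _j ∈ Finset.range M, L) = 1 := by
    rw [Finset.sum_const, Finset.card_range, nsmul_eq_mul, hL, hMdef]
    have hs1 : (s:ℝ) ^ (d - 1) ≠ 0 := (Real.rpow_pos_of_pos hs' _).ne'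
    push_cast
    rw [hsd]
    field_simp
  rw [hML] at hsum
  refine hsum.congr' ?_
  have hx0 : Tendsto (fun K : ℕ => α + (K:ℝ) * s) atTop atTop :=
    tendsto_atTop_add_const_left _ _ (tendsto_natCast_atTop_atTop.atTop_mul_const hs')
  filter_upwards [eventually_gt_atTop 0, hx0.eventually_gt_atTop 0] with K hK hx
  have hK' : (0:ℝ) < (K:ℝ) := Nat.cast_pos.mpr hK
  rw [show α + d + ((K:ℝ) + (N:ℝ)) * (s:ℝ) = (α + (K:ℝ) * s) + (M:ℝ) + d by
        rw [hMdef]; push_cast; ring,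
      show α + ((K:ℝ) + (N:ℝ)) * (s:ℝ) = (α + (K:ℝ) * s) + (M:ℝ) by
        rw [hMdef]; push_cast; ring,
      show α + d + (K:ℝ) * (s:ℝ) = (α + (K:ℝ) * s) + d by ring,
      gamma_telescope d hd0 M hx, Finset.sum_div]
  refine Finset.sum_congr rfl fun j _ => ?_
  have hyp : (0:ℝ) < α + (K:ℝ) * s + j := by positivity
  have hG : Real.Gamma (α + (K:ℝ) * s + j) ≠ 0 := (Real.Gamma_pos_of_pos hyp).ne'
  have hyd : ((α + (K:ℝ) * s + j) : ℝ) ^ d ≠ 0 := (Real.rpow_pos_of_pos hyp _).ne'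
  have hKd : ((K:ℝ)) ^ (d - 1) ≠ 0 := (Real.rpow_pos_of_pos hK' _).ne'
  have hsd0 : ((s:ℝ)) ^ d ≠ 0 := (Real.rpow_pos_of_pos hs' _).ne'
  rw [hF]
  simp only
  rw [Real.div_rpow hyp.le hK'.le,
    show (α + (K:ℝ) * s + j) ^ (d - 1) = (α + (K:ℝ) * s + j) ^ d / (α + (K:ℝ) * s + j) by
      rw [Real.rpow_sub hyp, Real.rpow_one]]
  field_simp
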